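/- For every sequence ⟨xₙ⟩_{n=1}^∞ in ℕ there exists an additively idempotent ultrafilter p on ℕ such that FS(⟨xₙ⟩_{n=1}^∞) ∈ p. -/

import Mathlib

attribute [local instance] Ultrafilter.add

/-- `FS x` is the set of all finite sums `∑_{t ∈ H} x t` over nonempty finite `H ⊆ ℕ`. -/
def FS (x : ℕ → ℕ) : Set ℕ :=
  {m | ∃ H : Finset ℕ, H.Nonempty ∧ m = ∑ t ∈ H, x t}

lemma hindmanFS_sub (a : Stream' ℕ) (m : ℕ) (hm : m ∈ Hindman.FS a) :
    ∃ H : Finset ℕ, H.Nonempty ∧ m = ∑ t ∈ H, a.get t := by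
  induction hm with
  | head' a => exact ⟨{0}, ⟨0, by simp⟩, by simp [Stream'.head]⟩
  | tail' a m h ih =>
    obtain ⟨H, hne, hs⟩ := ih
    refine ⟨H.image (· + 1), hne.image _, ?_⟩
    rw [Finset.sum_image (g := (· + 1)) (by intro x _ y _ h; simpa using h)]
    simpa [Stream'.tail, Stream'.get] using hs
  | cons' a m h ih =>
    obtain ⟨H, hne, hs⟩ := ih
    refine ⟨insert 0 (H.image (· + 1)), ⟨0, by simp⟩, ?_⟩
    rw [Finset.sum_insert (by simp), Finset.sum_image (g := (· + 1)) (by intro x _ y _ h; simpa using h)]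
    have : a.head = a.get 0 := rfl
    rw [this, hs]
    congr 1

theorem exists_idempotent_ultrafilter_containing_FS (x : ℕ → ℕ) :
    ∃ p : Ultrafilter ℕ, p + p = p ∧ FS x ∈ p := by
  obtain ⟨U, hidem, hU⟩ := Hindman.exists_idempotent_ultrafilter_le_FS (x : Stream' ℕ)
  refine ⟨U, hidem, ?_⟩
  exact Filter.mem_of_superset hU fun m hm => hindmanFS_sub _ m hm
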